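/- Let α > 1 and b > 0 be reals, let x* = (b/(α−1))^(1/α) and φ* = ((x*)^α + b)/x*. Let D be a finite set, ℓ : D → ℝ a function with ℓ(d) > 0 for all d ∈ D, and let P = {A₁, …, A_m} be any partition of D. Writing ℓ(A) = Σ_{d∈A} ℓ(d), it holds that Σ_{i : A_i ≠ ∅} (ℓ(A_i)^α + b) ≥ Σ_{d ∈ D, ℓ(d) ≥ x*} (ℓ(d)^α + b) + φ* · Σ_{d ∈ D, ℓ(d) < x*} ℓ(d). (The power of any assignment is at least the sum, over VMs of load at least x*, of their stand-alone machine costs, plus the optimal power rate times the total load of the VMs smaller than x*.) -/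

import Mathlib

open Finset

section aux

variable {α b : ℝ}

private lemma xs_pos (hα : 1 < α) (hb : 0 < b) : 0 < (b / (α - 1)) ^ (1 / α) :=
  Real.rpow_pos_of_pos (div_pos hb (by linarith)) _

private lemma xs_rpow (hα : 1 < α) (hb : 0 < b) :
    ((b / (α - 1)) ^ (1 / α)) ^ α = b / (α - 1) := by
  rw [← Real.rpow_mul (le_of_lt (div_pos hb (by linarith))), one_div,
    inv_mul_cancel₀ (by positivity : α ≠ 0), Real.rpow_one]

/-- Bernoulli-type: Y^α + α Y^(α-1) t ≤ (Y+t)^α. -/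
private lemma bern (hα : 1 < α) {Y t : ℝ} (hY : 0 < Y) (ht : 0 ≤ t) :
    Y ^ α + α * Y ^ (α - 1) * t ≤ (Y + t) ^ α := by
  have hs : (-1 : ℝ) ≤ t / Y := le_trans (by norm_num : (-1:ℝ) ≤ 0) (div_nonneg ht hY.le)
  have h := one_add_mul_self_le_rpow_one_add hs (le_of_lt hα)
  have h2 := mul_le_mul_of_nonneg_right h (le_of_lt (Real.rpow_pos_of_pos hY α))
  have key : (1 + t / Y) ^ α * Y ^ α = (Y + t) ^ α := by
    rw [← Real.mul_rpow (by positivity) (le_of_lt hY)]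
    congr 1
    field_simp
  have hYa : Y ^ (α - 1) * Y = Y ^ α := by
    rw [← Real.rpow_add_one (ne_of_gt hY), sub_add_cancel]
  calc Y ^ α + α * Y ^ (α - 1) * t
      = (1 + α * (t / Y)) * Y ^ α := by
        rw [add_mul, one_mul]
        congr 1
        rw [← hYa]
        field_simp
    _ ≤ (1 + t / Y) ^ α * Y ^ α := h2
    _ = (Y + t) ^ α := key

/-- f(t) ≥ φ* t  for t > 0, with φ* = α x*^(α-1). -/
private lemma allsmall (hα : 1 < α) (hb : 0 < b) {t : ℝ} (ht : 0 < t) :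
    α * ((b / (α - 1)) ^ (1 / α)) ^ (α - 1) * t ≤ t ^ α + b := by
  set x := (b / (α - 1)) ^ (1 / α) with hx
  have hx0 : 0 < x := xs_pos hα hb
  have hα0 : (0:ℝ) < α := by linarith
  have hconj : α.HolderConjugate (α / (α - 1)) :=
    (Real.holderConjugate_iff_eq_conjExponent hα).2 rfl
  have hy := Real.young_inequality_of_nonneg (le_of_lt ht)
    (le_of_lt (Real.rpow_pos_of_pos hx0 (α - 1))) hconj
  have hne1 : α - 1 ≠ 0 := by linarith
  have hxq : (x ^ (α - 1)) ^ (α / (α - 1)) = x ^ α := by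
    rw [← Real.rpow_mul (le_of_lt hx0), mul_comm, div_mul_cancel₀ _ hne1]
  rw [hxq, xs_rpow hα hb] at hy
  -- hy : t * x ^ (α - 1) ≤ t ^ α / α + (b / (α - 1)) / (α / (α - 1))
  have hq : (b / (α - 1)) / (α / (α - 1)) = b / α := by
    have h2 : α ≠ 0 := by positivity
    field_simp
  rw [hq] at hy
  have := mul_le_mul_of_nonneg_left hy (le_of_lt hα0)
  calc α * x ^ (α - 1) * t = α * (t * x ^ (α - 1)) := by ring
    _ ≤ α * (t ^ α / α + b / α) := this
    _ = t ^ α + b := by field_simp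
    _ ≤ t ^ α + b := le_refl _

/-- merging two big machines: u, v ≥ x* ⇒ (u+v)^α ≥ u^α + v^α + b. -/
private lemma mergebig (hα : 1 < α) (hb : 0 < b) {u v : ℝ}
    (hu : (b / (α - 1)) ^ (1 / α) ≤ u) (hv : (b / (α - 1)) ^ (1 / α) ≤ v) :
    u ^ α + v ^ α + b ≤ (u + v) ^ α := by
  set x := (b / (α - 1)) ^ (1 / α) with hxdef
  have hx0 : 0 < x := xs_pos hα hb
  have hxα : (α - 1) * x ^ α = b := by
    rw [xs_rpow hα hb, mul_div_cancel₀ _ (by linarith : α - 1 ≠ 0)]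
  -- WLOG v ≤ u
  have main : ∀ u v : ℝ, x ≤ u → x ≤ v → v ≤ u → u ^ α + v ^ α + b ≤ (u + v) ^ α := by
    intro u v hu hv hvu
    have hu0 : 0 < u := lt_of_lt_of_le hx0 hu
    have hv0 : 0 < v := lt_of_lt_of_le hx0 hv
    have h1 := bern hα hu0 (le_of_lt hv0)
    have h2 : v ^ α + b ≤ α * u ^ (α - 1) * v := by
      have hvp : v ^ (α - 1) ≤ u ^ (α - 1) :=
        Real.rpow_le_rpow (le_of_lt hv0) hvu (by linarith)
      have hva : v ^ (α - 1) * v = v ^ α := by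
        rw [← Real.rpow_add_one (ne_of_gt hv0), sub_add_cancel]
      have hxv : x ^ α ≤ v ^ α :=
        Real.rpow_le_rpow (le_of_lt hx0) hv (by linarith)
      have : v ^ α + b ≤ α * v ^ α := by
        nlinarith
      calc v ^ α + b ≤ α * v ^ α := this
        _ = α * v ^ (α - 1) * v := by rw [mul_assoc, hva]
        _ ≤ α * u ^ (α - 1) * v := by
            apply mul_le_mul_of_nonneg_right _ (le_of_lt hv0)
            exact mul_le_mul_of_nonneg_left hvp (by linarith)
    linarith
  rcases le_total v u with h | h
  · exact main u v hu hv h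
  · have := main v u hv hu h
    rw [add_comm u v]
    linarith
    
/-- key per-part inequality, by induction on the set of big machines. -/
private lemma key_ind {ι : Type*} [DecidableEq ι] (hα : 1 < α) (hb : 0 < b)
    (ℓ : ι → ℝ) (B : Finset ι) (hB : ∀ d ∈ B, (b / (α - 1)) ^ (1 / α) ≤ ℓ d)
    {t : ℝ} (ht : 0 ≤ t) (hne : B.Nonempty ∨ 0 < t) :
    (∑ d ∈ B, (ℓ d ^ α + b)) + α * ((b / (α - 1)) ^ (1 / α)) ^ (α - 1) * t
      ≤ (∑ d ∈ B, ℓ d + t) ^ α + b := by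
  have hx0 : 0 < (b / (α - 1)) ^ (1 / α) := xs_pos hα hb
  revert hB hne
  induction B using Finset.induction_on with
  | empty =>
    intro hB hne
    rcases hne with h | h
    · exact absurd h (by simp)
    · simpa using allsmall hα hb h
  | @insert a s ha ih =>
    intro hB hne
    have hax : (b / (α - 1)) ^ (1 / α) ≤ ℓ a := hB a (by simp)
    have ha0 : 0 < ℓ a := lt_of_lt_of_le hx0 hax
    rw [Finset.sum_insert ha, Finset.sum_insert ha]
    rcases s.eq_empty_or_nonempty with rfl | hs
    · simp only [Finset.sum_empty, add_zero, zero_add]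
      have h1 := bern hα ha0 ht
      have h2 : α * ((b / (α - 1)) ^ (1 / α)) ^ (α - 1) * t
          ≤ α * (ℓ a) ^ (α - 1) * t := by
        apply mul_le_mul_of_nonneg_right _ ht
        exact mul_le_mul_of_nonneg_left
          (Real.rpow_le_rpow (le_of_lt hx0) hax (by linarith)) (by linarith)
      linarith
    · have ih' := ih (fun d hd => hB d (Finset.mem_insert_of_mem hd)) (Or.inl hs)
      have hsum : (b / (α - 1)) ^ (1 / α) ≤ ∑ d ∈ s, ℓ d + t := by
        obtain ⟨e, he⟩ := hs
        have hpos : ∀ d ∈ s, 0 < ℓ d := fun d hd =>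
          lt_of_lt_of_le hx0 (hB d (Finset.mem_insert_of_mem hd))
        calc (b / (α - 1)) ^ (1 / α) ≤ ℓ e := hB e (Finset.mem_insert_of_mem he)
          _ ≤ ∑ d ∈ s, ℓ d := Finset.single_le_sum (fun d hd => le_of_lt (hpos d hd)) he
          _ ≤ ∑ d ∈ s, ℓ d + t := by linarith
      have hmerge := mergebig hα hb hax hsum
      have heq : ℓ a + (∑ d ∈ s, ℓ d + t) = ℓ a + ∑ d ∈ s, ℓ d + t := by ring
      rw [heq] at hmerge
      linarith

end aux

/-- Let α > 1, b > 0, x* = (b/(α−1))^(1/α) and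
φ* = ((x*)^α + b)/x*. For any finite set D of VMs with positive loads ℓ and any
partition A₁, …, A_m of D (pairwise disjoint parts covering D), the power of the
partition is at least the sum of the stand-alone costs of the VMs with load ≥ x*
plus φ* times the total load of the VMs with load < x*. -/
theorem stmt16 {ι : Type*} [DecidableEq ι] (α b : ℝ) (hα : 1 < α) (hb : 0 < b)
    (D : Finset ι) (ℓ : ι → ℝ) (hℓ : ∀ d ∈ D, 0 < ℓ d)
    (m : ℕ) (A : Fin m → Finset ι)
    (hdisj : ∀ i j, i ≠ j → Disjoint (A i) (A j))
    (hcover : ∀ d ∈ D, ∃ i, d ∈ A i) (hsub : ∀ i, A i ⊆ D) :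
    ∑ i ∈ Finset.univ.filter (fun i => (A i).Nonempty), ((∑ d ∈ A i, ℓ d) ^ α + b) ≥
      (∑ d ∈ D.filter (fun d => (b / (α - 1)) ^ (1 / α) ≤ ℓ d), (ℓ d ^ α + b)) +
        ((((b / (α - 1)) ^ (1 / α)) ^ α + b) / ((b / (α - 1)) ^ (1 / α))) *
          ∑ d ∈ D.filter (fun d => ℓ d < (b / (α - 1)) ^ (1 / α)), ℓ d := by
  set x := (b / (α - 1)) ^ (1 / α) with hxdef
  have hx0 : 0 < x := xs_pos hα hb
  -- φ* = α x^(α-1)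
  have hphi : (x ^ α + b) / x = α * x ^ (α - 1) := by
    have hxα : x ^ α = b / (α - 1) := xs_rpow hα hb
    have hne1 : α - 1 ≠ 0 := by linarith
    have hb' : b = (α - 1) * x ^ α := by rw [hxα]; field_simp
    have hxa1 : x ^ α / x = x ^ (α - 1) := by
      rw [← Real.rpow_sub_one (ne_of_gt hx0)]
    calc (x ^ α + b) / x = (α * x ^ α) / x := by rw [hb']; ring_nf
      _ = α * (x ^ α / x) := by ring
      _ = α * x ^ (α - 1) := by rw [hxa1]
  rw [hphi]
  set φ := α * x ^ (α - 1) with hφdef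
  -- per-part inequality
  have hpart : ∀ i ∈ Finset.univ.filter (fun i => (A i).Nonempty),
      (∑ d ∈ (A i).filter (fun d => x ≤ ℓ d), (ℓ d ^ α + b))
        + φ * (∑ d ∈ (A i).filter (fun d => ℓ d < x), ℓ d)
        ≤ (∑ d ∈ A i, ℓ d) ^ α + b := by
    intro i hi
    simp only [Finset.mem_filter, Finset.mem_univ, true_and] at hi
    set B := (A i).filter (fun d => x ≤ ℓ d) with hBdef
    set S := (A i).filter (fun d => ℓ d < x) with hSdef
    have hsplit : ∑ d ∈ B, ℓ d + ∑ d ∈ S, ℓ d = ∑ d ∈ A i, ℓ d := by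
      rw [hBdef, hSdef]
      rw [← Finset.sum_filter_add_sum_filter_not (A i) (fun d => x ≤ ℓ d) ℓ]
      congr 1
      apply Finset.sum_congr _ (fun _ _ => rfl)
      apply Finset.filter_congr
      intro d _; simp [not_le]
    have hSpos : ∀ d ∈ S, 0 < ℓ d := fun d hd =>
      hℓ d (hsub i (Finset.mem_of_mem_filter d hd))
    have ht : 0 ≤ ∑ d ∈ S, ℓ d := Finset.sum_nonneg fun d hd => le_of_lt (hSpos d hd)
    have hne : B.Nonempty ∨ 0 < ∑ d ∈ S, ℓ d := by
      rcases B.eq_empty_or_nonempty with hBe | hBne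
      · right
        have hSne : S.Nonempty := by
          obtain ⟨e, he⟩ := hi
          rcases le_or_gt x (ℓ e) with h | h
          · exact absurd (Finset.mem_filter.2 ⟨he, h⟩) (by rw [← hBdef, hBe]; simp)
          · exact ⟨e, Finset.mem_filter.2 ⟨he, h⟩⟩
        obtain ⟨e, he⟩ := hSne
        exact Finset.sum_pos' (fun d hd => le_of_lt (hSpos d hd)) ⟨e, he, hSpos e he⟩
      · exact Or.inl hBne
    have := key_ind hα hb ℓ B (fun d hd => (Finset.mem_filter.1 hd).2) ht hne
    rw [hsplit] at this
    exact this
  -- sum the per-part inequalities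
  have hsum := Finset.sum_le_sum hpart
  -- rewrite the partitioned sums over D
  have hD : D = Finset.univ.biUnion A := by
    ext d
    simp only [Finset.mem_biUnion, Finset.mem_univ, true_and]
    constructor
    · exact hcover d
    · rintro ⟨i, hi⟩; exact hsub i hi
  have hpd : ∀ p : ι → Prop, ∀ [DecidablePred p], ∀ g : ι → ℝ,
      ∑ d ∈ D.filter p, g d = ∑ i : Fin m, ∑ d ∈ (A i).filter p, g d := by
    intro p _ g
    rw [hD, Finset.filter_biUnion]
    apply Finset.sum_biUnion
    intro i _ j _ hij
    exact Finset.disjoint_filter_filter (hdisj i j hij)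
  rw [hpd (fun d => x ≤ ℓ d) (fun d => ℓ d ^ α + b),
      hpd (fun d => ℓ d < x) ℓ]
  -- restrict to nonempty parts
  have hzero : ∀ i ∈ (Finset.univ : Finset (Fin m)),
      i ∉ Finset.univ.filter (fun i => (A i).Nonempty) →
      (fun i => (∑ d ∈ (A i).filter (fun d => x ≤ ℓ d), (ℓ d ^ α + b))
        + φ * (∑ d ∈ (A i).filter (fun d => ℓ d < x), ℓ d)) i = 0 := by
    intro i _ hi
    simp only [Finset.mem_filter, Finset.mem_univ, true_and, Finset.not_nonempty_iff_eq_empty] at hi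
    simp [hi]
  rw [ge_iff_le, Finset.mul_sum]
  calc (∑ i : Fin m, ∑ d ∈ (A i).filter (fun d => x ≤ ℓ d), (ℓ d ^ α + b))
        + ∑ i : Fin m, φ * ∑ d ∈ (A i).filter (fun d => ℓ d < x), ℓ d
      = ∑ i : Fin m, ((∑ d ∈ (A i).filter (fun d => x ≤ ℓ d), (ℓ d ^ α + b))
          + φ * (∑ d ∈ (A i).filter (fun d => ℓ d < x), ℓ d)) := by
        rw [Finset.sum_add_distrib]
    _ = ∑ i ∈ Finset.univ.filter (fun i => (A i).Nonempty),
          ((∑ d ∈ (A i).filter (fun d => x ≤ ℓ d), (ℓ d ^ α + b))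
          + φ * (∑ d ∈ (A i).filter (fun d => ℓ d < x), ℓ d)) :=
        (Finset.sum_subset (Finset.filter_subset _ _) hzero).symm
    _ ≤ _ := hsum
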